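/- Suppose f(z) = 0 for all z ∈ ker B but there is no continuous linear functional g on V with f(v) = g(B v) for all v ∈ H (the intermediate case). Then the total strain energy of the solutions u^ε of the scaled problem blows up at a rate of o(ε⁻²): as ε → 0⁺, ε² ⟨A u^ε, A u^ε⟩_U + ⟨B u^ε, B u^ε⟩_V → ∞ while ε² ( ε² ⟨A u^ε, A u^ε⟩_U + ⟨B u^ε, B u^ε⟩_V ) → 0. -/

import Mathlib

open RealInnerProductSpace Filter Topology

-- Helper 1: approximation of f by q ∘ B
theorem aux_approx
    {H V : Type*}
    [NormedAddCommGroup H] [InnerProductSpace ℝ H] [CompleteSpace H]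
    [NormedAddCommGroup V] [InnerProductSpace ℝ V] [CompleteSpace V]
    (B : H →L[ℝ] V) (f : H →L[ℝ] ℝ)
    (hf : ∀ z : H, B z = 0 → f z = 0)
    {δ : ℝ} (hδ : 0 < δ) :
    ∃ q : V, ∀ w : H, |f w - ⟪q, B w⟫| ≤ δ * ‖w‖ := by
  set r : H := (InnerProductSpace.toDual ℝ H).symm f with hr
  have hrw : ∀ w : H, ⟪r, w⟫ = f w := fun w =>
    InnerProductSpace.toDual_symm_apply
  set K : Submodule ℝ H := LinearMap.range (ContinuousLinearMap.adjoint B : V →ₗ[ℝ] H) with hK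
  have hrK : r ∈ Kᗮᗮ := by
    intro w hw
    have hBw : B w = 0 := by
      have h1 : ⟪(ContinuousLinearMap.adjoint B) (B w), w⟫ = 0 := by
        have := hw ((ContinuousLinearMap.adjoint B) (B w)) ⟨B w, rfl⟩
        simpa [real_inner_comm] using this
      rw [ContinuousLinearMap.adjoint_inner_left] at h1
      exact inner_self_eq_zero.mp h1
    have : ⟪r, w⟫ = 0 := by rw [hrw]; exact hf w hBw
    simpa [real_inner_comm] using this
  rw [Submodule.orthogonal_orthogonal_eq_closure] at hrK
  have hclo : r ∈ closure (K : Set H) := hrK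
  rcases Metric.mem_closure_iff.mp hclo δ hδ with ⟨y, hyK, hdy⟩
  rcases hyK with ⟨q, rfl⟩
  refine ⟨q, fun w => ?_⟩
  have h1 : f w - ⟪q, B w⟫ = ⟪r - (ContinuousLinearMap.adjoint B) q, w⟫ := by
    rw [inner_sub_left, hrw, ContinuousLinearMap.adjoint_inner_left]
  rw [h1]
  calc |⟪r - (ContinuousLinearMap.adjoint B) q, w⟫|
      ≤ ‖r - (ContinuousLinearMap.adjoint B) q‖ * ‖w‖ := abs_real_inner_le_norm _ _
    _ ≤ δ * ‖w‖ := by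
        apply mul_le_mul_of_nonneg_right _ (norm_nonneg w)
        rw [← dist_eq_norm] at *
        exact le_of_lt hdy

theorem aux_unbdd
    {H V : Type*}
    [NormedAddCommGroup H] [InnerProductSpace ℝ H]
    [NormedAddCommGroup V] [InnerProductSpace ℝ V]
    (B : H →L[ℝ] V) (f : H →L[ℝ] ℝ)
    (hf : ∀ z : H, B z = 0 → f z = 0)
    (hnot : ¬ ∃ g : V →L[ℝ] ℝ, ∀ v : H, f v = g (B v)) :
    ∀ C : ℝ, ∃ v : H, C * ‖B v‖ < |f v| := by
  by_contra hcon
  push_neg at hcon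
  rcases hcon with ⟨C, hC⟩
  apply hnot
  -- build the functional on range B
  set Bl : H →ₗ[ℝ] V := (B : H →ₗ[ℝ] V) with hBl
  have hker : LinearMap.ker Bl ≤ LinearMap.ker (f : H →ₗ[ℝ] ℝ) := by
    intro x hx
    exact hf x hx
  set fbar : (H ⧸ LinearMap.ker Bl) →ₗ[ℝ] ℝ :=
    (LinearMap.ker Bl).liftQ (f : H →ₗ[ℝ] ℝ) hker with hfbar
  set e := LinearMap.quotKerEquivRange Bl with he
  set f₀ : LinearMap.range Bl →ₗ[ℝ] ℝ := fbar ∘ₗ (e.symm : LinearMap.range Bl →ₗ[ℝ] (H ⧸ LinearMap.ker Bl)) with hf₀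
  have hf₀v : ∀ v : H, f₀ ⟨Bl v, LinearMap.mem_range_self Bl v⟩ = f v := by
    intro v
    have h1 : e (Submodule.Quotient.mk v) = ⟨Bl v, LinearMap.mem_range_self Bl v⟩ :=
      Subtype.ext (LinearMap.quotKerEquivRange_apply_mk Bl v)
    have h2 : e.symm ⟨Bl v, LinearMap.mem_range_self Bl v⟩ = Submodule.Quotient.mk v := by
      rw [← h1, LinearEquiv.symm_apply_apply]
    simp [hf₀, h2, hfbar]
  have hbound : ∀ y : LinearMap.range Bl, ‖f₀ y‖ ≤ C * ‖y‖ := by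
    rintro ⟨y, hy⟩
    rcases hy with ⟨v, rfl⟩
    have := hf₀v v
    rw [this]
    simpa [hBl] using hC v
  set g₀ : (LinearMap.range Bl : Submodule ℝ V) →L[ℝ] ℝ := f₀.mkContinuous C hbound with hg₀
  rcases exists_extension_norm_eq (LinearMap.range Bl) g₀ with ⟨g, hg, _⟩
  refine ⟨g, fun v => ?_⟩
  have := hg ⟨Bl v, LinearMap.mem_range_self Bl v⟩
  have h3 : g₀ ⟨Bl v, LinearMap.mem_range_self Bl v⟩ = f v := hf₀v v
  rw [h3] at this
  simpa [hBl] using this.symm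

theorem aux_CS
    {H U V : Type*}
    [NormedAddCommGroup H] [InnerProductSpace ℝ H]
    [NormedAddCommGroup U] [InnerProductSpace ℝ U]
    [NormedAddCommGroup V] [InnerProductSpace ℝ V]
    (A : H →L[ℝ] U) (B : H →L[ℝ] V) (f : H →L[ℝ] ℝ)
    (hf : ∀ z : H, B z = 0 → f z = 0)
    {ε : ℝ} (hε : 0 < ε) (w : H)
    (hw : ∀ v : H, ε ^ 2 * ⟪A w, A v⟫ + ⟪B w, B v⟫ = f v)
    (v : H) :
    f v ^ 2 ≤ (ε ^ 2 * ⟪A w, A w⟫ + ⟪B w, B w⟫) * (ε ^ 2 * ⟪A v, A v⟫ + ⟪B v, B v⟫) := by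
  set E : ℝ := ε ^ 2 * ⟪A w, A w⟫ + ⟪B w, B w⟫ with hE
  set d : ℝ := ε ^ 2 * ⟪A v, A v⟫ + ⟪B v, B v⟫ with hd
  have hd0 : 0 ≤ d :=
    add_nonneg (mul_nonneg (sq_nonneg ε) real_inner_self_nonneg) real_inner_self_nonneg
  rcases eq_or_lt_of_le hd0 with hd1 | hd1
  · -- d = 0 case
    have hBv : ⟪B v, B v⟫ = 0 := by
      have h1 : 0 ≤ ε ^ 2 * ⟪A v, A v⟫ := mul_nonneg (sq_nonneg ε) real_inner_self_nonneg
      have h2 : (0:ℝ) ≤ ⟪B v, B v⟫ := real_inner_self_nonneg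
      nlinarith [hd1.symm]
    have : B v = 0 := inner_self_eq_zero.mp hBv
    rw [hf v this]
    simp [← hd1]
  · -- d > 0 case
    set t : ℝ := f v / d with ht
    have hpos : 0 ≤ ε ^ 2 * ⟪A (w - t • v), A (w - t • v)⟫ + ⟪B (w - t • v), B (w - t • v)⟫ :=
      add_nonneg (mul_nonneg (sq_nonneg ε) real_inner_self_nonneg) real_inner_self_nonneg
    have hexp : ε ^ 2 * ⟪A (w - t • v), A (w - t • v)⟫ + ⟪B (w - t • v), B (w - t • v)⟫
        = E - 2 * t * f v + t ^ 2 * d := by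
      have h1 := hw v
      have h2 := hw w
      simp only [map_sub, map_smul, inner_sub_left, inner_sub_right,
        real_inner_smul_left, real_inner_smul_right, hE, hd]
      have hAc : ⟪A v, A w⟫ = ⟪A w, A v⟫ := real_inner_comm _ _
      have hBc : ⟪B v, B w⟫ = ⟪B w, B v⟫ := real_inner_comm _ _
      rw [hAc, hBc]
      linear_combination (-2*t) * h1
    rw [hexp] at hpos
    have htd : t * d = f v := div_mul_cancel₀ _ (ne_of_gt hd1)
    nlinarith [hpos, htd, hd1]

theorem aux_num (X Y s : ℝ) (h5 : X ^ 2 + Y ^ 2 ≤ s * X + 2 * s * Y) :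
    X ^ 2 + Y ^ 2 ≤ 5 * s ^ 2 := by
  nlinarith [sq_nonneg (X - s), sq_nonneg (Y - 2 * s)]

theorem stmt_12
    {H U V : Type*}
    [NormedAddCommGroup H] [InnerProductSpace ℝ H] [CompleteSpace H]
    [NormedAddCommGroup U] [InnerProductSpace ℝ U] [CompleteSpace U]
    [NormedAddCommGroup V] [InnerProductSpace ℝ V] [CompleteSpace V]
    (A : H →L[ℝ] U) (B : H →L[ℝ] V)
    (c₁ c₂ : ℝ) (hc₁ : 0 < c₁) (hc₂ : 0 < c₂)
    (hlow : ∀ v : H, c₁ * ‖v‖ ≤ ‖A v‖ + ‖B v‖)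
    (hup : ∀ v : H, ‖A v‖ + ‖B v‖ ≤ c₂ * ‖v‖)
    (f : H →L[ℝ] ℝ)
    (hf : ∀ z : H, B z = 0 → f z = 0)
    (hnot : ¬ ∃ g : V →L[ℝ] ℝ, ∀ v : H, f v = g (B v))
    (u : ℝ → H)
    (hu : ∀ ε : ℝ, 0 < ε → ∀ v : H,
      ε ^ 2 * ⟪A (u ε), A v⟫ + ⟪B (u ε), B v⟫ = f v) :
    Tendsto (fun ε : ℝ => ε ^ 2 * ⟪A (u ε), A (u ε)⟫ + ⟪B (u ε), B (u ε)⟫)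
      (𝓝[>] 0) atTop ∧
    Tendsto
      (fun ε : ℝ => ε ^ 2 * (ε ^ 2 * ⟪A (u ε), A (u ε)⟫ + ⟪B (u ε), B (u ε)⟫))
      (𝓝[>] 0) (𝓝 0) := by
  constructor
  · -- Part 1: energy blows up
    rw [tendsto_atTop]
    intro M
    obtain ⟨v, hv⟩ := aux_unbdd B f hf hnot (Real.sqrt (2 * max M 0 + 2))
    have hC0 : (0:ℝ) ≤ Real.sqrt (2 * max M 0 + 2) := Real.sqrt_nonneg _
    have hBv : B v ≠ 0 := by
      intro h
      rw [h] at hv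
      simp only [norm_zero, mul_zero] at hv
      rw [hf v h] at hv
      simp at hv
    have hBvpos : 0 < ⟪B v, B v⟫ :=
      lt_of_le_of_ne real_inner_self_nonneg (fun h => hBv (inner_self_eq_zero.mp h.symm))
    have hAv0 : (0:ℝ) ≤ ⟪A v, A v⟫ := real_inner_self_nonneg
    set ε₀ : ℝ := Real.sqrt (⟪B v, B v⟫ / (⟪A v, A v⟫ + 1)) with hε₀def
    have hε₀ : 0 < ε₀ := Real.sqrt_pos.mpr (div_pos hBvpos (by linarith))
    filter_upwards [Ioo_mem_nhdsGT_of_mem (Set.left_mem_Ico.mpr hε₀)] with ε hε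
    obtain ⟨hε1, hε2⟩ := hε
    have key := aux_CS A B f hf hε1 (u ε) (hu ε hε1) v
    have hE0 : (0:ℝ) ≤ ε ^ 2 * ⟪A (u ε), A (u ε)⟫ + ⟪B (u ε), B (u ε)⟫ :=
      add_nonneg (mul_nonneg (sq_nonneg ε) real_inner_self_nonneg) real_inner_self_nonneg
    -- square the unboundedness inequality
    have hfv2 : (2 * max M 0 + 2) * ⟪B v, B v⟫ < f v ^ 2 := by
      have h1 : (Real.sqrt (2 * max M 0 + 2) * ‖B v‖) ^ 2 < |f v| ^ 2 := by
        apply sq_lt_sq' _ hv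
        have : 0 ≤ Real.sqrt (2 * max M 0 + 2) * ‖B v‖ := by positivity
        linarith [abs_nonneg (f v)]
      have h2 : Real.sqrt (2 * max M 0 + 2) ^ 2 = 2 * max M 0 + 2 :=
        Real.sq_sqrt (by positivity)
      have h3 : ‖B v‖ ^ 2 = ⟪B v, B v⟫ := (real_inner_self_eq_norm_sq _).symm
      calc (2 * max M 0 + 2) * ⟪B v, B v⟫
          = (Real.sqrt (2 * max M 0 + 2) * ‖B v‖) ^ 2 := by rw [mul_pow, h2, h3]
        _ < |f v| ^ 2 := h1
        _ = f v ^ 2 := sq_abs _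
    -- bound on the denominator
    have hεsq : ε ^ 2 * (⟪A v, A v⟫ + 1) < ⟪B v, B v⟫ := by
      have h1 : ε ^ 2 < ε₀ ^ 2 := by nlinarith
      have h2 : ε₀ ^ 2 = ⟪B v, B v⟫ / (⟪A v, A v⟫ + 1) :=
        Real.sq_sqrt (le_of_lt (div_pos hBvpos (by linarith)))
      rw [h2] at h1
      rw [← lt_div_iff₀ (by linarith : (0:ℝ) < ⟪A v, A v⟫ + 1)]
      exact h1
    have hd_lt : ε ^ 2 * ⟪A v, A v⟫ + ⟪B v, B v⟫ < 2 * ⟪B v, B v⟫ := by nlinarith [sq_nonneg ε]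
    have hd_pos : 0 < ε ^ 2 * ⟪A v, A v⟫ + ⟪B v, B v⟫ := by nlinarith [sq_nonneg ε]
    have hM : M ≤ max M 0 := le_max_left M 0
    nlinarith [key, hfv2, hd_lt, hd_pos, hE0, hM, hBvpos]
  · -- Part 2: ε² times energy tends to 0
    rw [Metric.tendsto_nhds]
    intro δ hδ
    set s : ℝ := Real.sqrt (δ / 8) with hsdef
    have hs0 : 0 < s := Real.sqrt_pos.mpr (by linarith)
    have hs2 : s ^ 2 = δ / 8 := Real.sq_sqrt (by linarith)
    obtain ⟨q, hq⟩ := aux_approx B f hf (mul_pos hc₁ hs0)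
    set ε₀ : ℝ := min 1 (s / (‖q‖ + 1)) with hε₀def
    have hε₀ : 0 < ε₀ := lt_min one_pos (div_pos hs0 (by positivity))
    filter_upwards [Ioo_mem_nhdsGT_of_mem (Set.left_mem_Ico.mpr hε₀)] with ε hε
    obtain ⟨hε1, hε2⟩ := hε
    have hε_le1 : ε ≤ 1 := le_of_lt (lt_of_lt_of_le hε2 (min_le_left _ _))
    have hεq : ε * (‖q‖ + 1) ≤ s := by
      have h1 : ε < s / (‖q‖ + 1) := lt_of_lt_of_le hε2 (min_le_right _ _)
      rw [lt_div_iff₀ (by positivity)] at h1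
      linarith
    set a : ℝ := ‖A (u ε)‖ with hadef
    set b : ℝ := ‖B (u ε)‖ with hbdef
    have ha0 : 0 ≤ a := norm_nonneg _
    have hb0 : 0 ≤ b := norm_nonneg _
    have hAa : ⟪A (u ε), A (u ε)⟫ = a ^ 2 := real_inner_self_eq_norm_sq _
    have hBb : ⟪B (u ε), B (u ε)⟫ = b ^ 2 := real_inner_self_eq_norm_sq _
    have hE : ε ^ 2 * a ^ 2 + b ^ 2 = f (u ε) := by
      rw [← hAa, ← hBb]; exact hu ε hε1 (u ε)
    have hfu : |f (u ε) - ⟪q, B (u ε)⟫| ≤ c₁ * s * ‖u ε‖ := hq (u ε)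
    have hqB : ⟪q, B (u ε)⟫ ≤ ‖q‖ * b := real_inner_le_norm q _
    have hnrm : c₁ * ‖u ε‖ ≤ a + b := hlow (u ε)
    have hkey : ε ^ 2 * a ^ 2 + b ^ 2 ≤ ‖q‖ * b + s * (a + b) := by
      have h1 : f (u ε) - ⟪q, B (u ε)⟫ ≤ c₁ * s * ‖u ε‖ := le_of_abs_le hfu
      have h2 : c₁ * s * ‖u ε‖ ≤ s * (a + b) := by nlinarith [norm_nonneg (u ε)]
      linarith [hE.ge, hE.le]
    -- multiply by ε² and use ε ≤ 1, ε‖q‖ ≤ s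
    have h6 : ε * ‖q‖ ≤ s := by
      have h61 : ε * ‖q‖ ≤ ε * (‖q‖ + 1) :=
        mul_le_mul_of_nonneg_left (by linarith) hε1.le
      linarith
    have h7 : ε * s ≤ s := by
      have h71 : ε * s ≤ 1 * s := mul_le_mul_of_nonneg_right hε_le1 hs0.le
      linarith
    have h8 : 0 ≤ ε * b * (2 * s - ε * ‖q‖ - ε * s) := by
      apply mul_nonneg (mul_nonneg hε1.le hb0)
      linarith
    have hx : ε ^ 2 * (ε ^ 2 * a ^ 2 + b ^ 2) ≤ ε ^ 2 * (‖q‖ * b + s * (a + b)) :=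
      mul_le_mul_of_nonneg_left hkey (sq_nonneg ε)
    have e1 : (ε ^ 2 * a) ^ 2 + (ε * b) ^ 2 = ε ^ 2 * (ε ^ 2 * a ^ 2 + b ^ 2) := by ring
    have e2 : s * (ε ^ 2 * a) + 2 * s * (ε * b)
        = ε ^ 2 * (‖q‖ * b + s * (a + b)) + ε * b * (2 * s - ε * ‖q‖ - ε * s) := by ring
    have h5 : (ε ^ 2 * a) ^ 2 + (ε * b) ^ 2 ≤ s * (ε ^ 2 * a) + 2 * s * (ε * b) := by
      rw [e1, e2]; linarith
    have hfin : ε ^ 2 * (ε ^ 2 * a ^ 2 + b ^ 2) ≤ 5 * s ^ 2 := by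
      have h9 := aux_num (ε ^ 2 * a) (ε * b) s h5
      linarith [e1]
    have hpos : 0 ≤ ε ^ 2 * (ε ^ 2 * a ^ 2 + b ^ 2) := by positivity
    rw [hAa, hBb, Real.dist_eq, sub_zero, abs_of_nonneg hpos]
    linarith [hfin, hs2, hδ]
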